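/- For the real recurrence x_{n+1} = x_n + 1/x_n with x_1 > 0, for every i ≥ 2 one has the two-sided bound 2(i−1) ≤ x_i² ≤ 2i + log(i−1) + γ, where γ := x_1² + 1/x_1² − 2. -/

import Mathlib

/-- Two-sided bound for the recurrence `x (n+1) = x n + 1 / x n` (indexed from 1):
for `i ≥ 2`, `2 (i-1) ≤ x i ^ 2 ≤ 2 i + log (i-1) + γ` with
`γ = x 1 ^ 2 + 1 / x 1 ^ 2 - 2`. -/
theorem recurrence_sq_two_sided_bound
    (x : ℕ → ℝ) (hx1 : 0 < x 1)
    (hx : ∀ n, 1 ≤ n → x (n + 1) = x n + 1 / x n)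
    (i : ℕ) (hi : 2 ≤ i) :
    2 * ((i : ℝ) - 1) ≤ (x i) ^ 2 ∧
      (x i) ^ 2 ≤ 2 * (i : ℝ) + Real.log ((i : ℝ) - 1) + ((x 1) ^ 2 + 1 / (x 1) ^ 2 - 2) := by
  -- positivity
  have hpos : ∀ n, 1 ≤ n → 0 < x n := by
    intro n hn
    induction n with
    | zero => omega
    | succ m ih =>
      rcases Nat.lt_or_ge 1 (m + 1) with h | h
      · have hm : 1 ≤ m := by omega
        have hxm := ih hm
        rw [hx m hm]
        positivity
      · have : m + 1 = 1 := by omega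
        rw [this]; exact hx1
  -- squared recurrence
  have hsq : ∀ n, 1 ≤ n → x (n + 1) ^ 2 = x n ^ 2 + 2 + 1 / x n ^ 2 := by
    intro n hn
    have hne : x n ≠ 0 := (hpos n hn).ne'
    rw [hx n hn]
    field_simp
    ring
  -- lower bound: 2 * i ≤ x i ^ 2 for i ≥ 2
  have hlow : ∀ n : ℕ, 2 ≤ n → 2 * (n : ℝ) ≤ x n ^ 2 := by
    intro n hn
    induction n, hn using Nat.le_induction with
    | base =>
      have h2 : x 2 ^ 2 = x 1 ^ 2 + 2 + 1 / x 1 ^ 2 := hsq 1 le_rfl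
      have hAM : 2 ≤ x 1 ^ 2 + 1 / x 1 ^ 2 := by
        have hp : (0:ℝ) < x 1 ^ 2 := by positivity
        have h1 : 1 / x 1 ^ 2 * x 1 ^ 2 = 1 := one_div_mul_cancel hp.ne'
        nlinarith [sq_nonneg (x 1 ^ 2 - 1), (by positivity : (0:ℝ) ≤ 1 / x 1 ^ 2)]
      rw [h2]; push_cast; linarith
    | succ m hm ih =>
      have h := hsq m (by omega)
      have hxm : 0 < x m := hpos m (by omega)
      have : 0 < 1 / x m ^ 2 := by positivity
      push_cast
      rw [h]; linarith
  -- upper bound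
  have hup : ∀ n, 2 ≤ n →
      x n ^ 2 ≤ 2 * (n : ℝ) + Real.log ((n : ℝ) - 1) + ((x 1) ^ 2 + 1 / (x 1) ^ 2 - 2) := by
    intro n hn
    induction n, hn using Nat.le_induction with
    | base =>
      have h2 : x 2 ^ 2 = x 1 ^ 2 + 2 + 1 / x 1 ^ 2 := hsq 1 le_rfl
      norm_num [h2]
      linarith [h2.le]
    | succ m hm ih =>
      have h := hsq m (by omega)
      have hmR : (2:ℝ) ≤ (m : ℝ) := by exact_mod_cast hm
      have hlm := hlow m hm
      have hxm2 : (0:ℝ) < x m ^ 2 := pow_pos (hpos m (by omega)) 2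
      have hinv : 1 / x m ^ 2 ≤ 1 / (2 * (m:ℝ)) := by
        apply one_div_le_one_div_of_le (by linarith) hlm
      -- log((m-1)/m) ≤ -1/m, i.e. log m - log (m-1) ≥ 1/m
      have hlog : Real.log ((m:ℝ) - 1) + 1 / (m:ℝ) ≤ Real.log (m:ℝ) := by
        have hm1 : (0:ℝ) < (m:ℝ) - 1 := by linarith
        have hm0 : (0:ℝ) < (m:ℝ) := by linarith
        have hkey : Real.log (((m:ℝ) - 1) / (m:ℝ)) ≤ ((m:ℝ) - 1) / (m:ℝ) - 1 :=
          Real.log_le_sub_one_of_pos (by positivity)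
        rw [Real.log_div hm1.ne' hm0.ne'] at hkey
        have : ((m:ℝ) - 1) / (m:ℝ) - 1 = -(1 / (m:ℝ)) := by field_simp; ring
        rw [this] at hkey
        linarith
      have hhalf : 1 / (2 * (m:ℝ)) ≤ 1 / (m:ℝ) := by
        apply one_div_le_one_div_of_le (by linarith) (by linarith)
      push_cast
      rw [h]
      push_cast at ih
      have : ((m:ℝ) + 1) - 1 = (m:ℝ) := by ring
      rw [this]
      linarith
  refine ⟨?_, hup i hi⟩
  have := hlow i hi
  have hiR : (2:ℝ) ≤ (i : ℝ) := by exact_mod_cast hi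
  linarith
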